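/- Let A be a Drinfeld coefficient ring, 𝔞 ∈ I(A), x ∈ K \ 𝔞. Define r(x,𝔞) = min{deg y : y ∈ K, y ≡ x mod 𝔞} and w(x,𝔞) = dim_{F_q}{a ∈ 𝔞 : deg a ≤ r(x,𝔞)}. Then Z_{x,𝔞}(S) = Q_{r(x,𝔞)} Z_{0,𝔞}(S) + q^{w(x,𝔞)} S^{r(x,𝔞)}, where Q_i cuts off all terms of degree ≤ i of a formal Laurent series. In particular, when evaluating at a real number S ≥ 1 (assuming convergence in a suitable sense, or as an inequality of all truncated partial sums), Z_{x,𝔞}(S) > Z_{0,𝔞}(S). -/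
import Mathlib


/-- Proposition 8.4 and Corollary 8.5: for `x ∉ 𝔞`, with
`r = r(x,𝔞) = min{deg y : y ≡ x mod 𝔞}` and `w = w(x,𝔞) = dim_{F_q} 𝔞_r`,
one has `Z_{x,𝔞}(S) = Q_r Z_{0,𝔞}(S) + q^w S^r` (stated coefficientwise:
the coefficients of `Z_{x,𝔞}` and `Z_{0,𝔞}` agree in degrees `> r`, the coefficient
of `Z_{x,𝔞}` in degree `r` is `q^w = #𝔞_r`, and its coefficients vanish below `r`);
consequently every truncated partial sum of `Z_{x,𝔞}(S)` strictly exceeds that of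
`Z_{0,𝔞}(S)` at any real `S ≥ 1`.  Here `deg` is a nonarchimedean degree function. -/
theorem partialZeta_expansion_and_gt
    {K : Type*} [Field K] (deg : K → ℤ)
    (hneg : ∀ u : K, u ≠ 0 → deg (-u) = deg u)
    (hna : ∀ u v : K, u ≠ 0 → v ≠ 0 → u + v ≠ 0 → deg (u + v) ≤ max (deg u) (deg v))
    (𝔞 : AddSubgroup K) (x : K) (hx : x ∉ 𝔞)
    (r : ℤ)
    (hr_ex : ∃ y : K, y - x ∈ 𝔞 ∧ deg y = r)
    (hr_min : ∀ y : K, y ≠ 0 → y - x ∈ 𝔞 → r ≤ deg y)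
    (n₀ : ℤ)
    (hlb : ∀ y : K, y ≠ 0 → (y ∈ 𝔞 ∨ y - x ∈ 𝔞) → n₀ ≤ deg y)
    (hfin : ∀ n : ℤ, {y : K | (y ∈ 𝔞 ∨ y - x ∈ 𝔞) ∧ y ≠ 0 ∧ deg y = n}.Finite) :
    (∀ n : ℤ, r < n →
      Nat.card {y : K | y - x ∈ 𝔞 ∧ y ≠ 0 ∧ deg y = n} =
        Nat.card {a : K | a ∈ 𝔞 ∧ a ≠ 0 ∧ deg a = n}) ∧
    Nat.card {y : K | y - x ∈ 𝔞 ∧ y ≠ 0 ∧ deg y = r} =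
      Nat.card {a : K | a ∈ 𝔞 ∧ (a = 0 ∨ deg a ≤ r)} ∧
    (∀ n : ℤ, n < r → Nat.card {y : K | y - x ∈ 𝔞 ∧ y ≠ 0 ∧ deg y = n} = 0) ∧
    (∀ S : ℝ, 1 ≤ S → ∀ N : ℤ, r ≤ N →
      (∑ n ∈ Finset.Icc n₀ N,
          (Nat.card {a : K | a ∈ 𝔞 ∧ a ≠ 0 ∧ deg a = n} : ℝ) * S ^ n) <
        ∑ n ∈ Finset.Icc n₀ N,
          (Nat.card {y : K | y - x ∈ 𝔞 ∧ y ≠ 0 ∧ deg y = n} : ℝ) * S ^ n) := by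
  obtain ⟨y₀, hy₀a, hy₀deg⟩ := hr_ex
  -- elements of the coset x + 𝔞 are nonzero
  have hcne : ∀ y : K, y - x ∈ 𝔞 → y ≠ 0 := by
    intro y hy h0
    apply hx
    have h : -(y - x) ∈ 𝔞 := 𝔞.neg_mem hy
    have he : -(y - x) = x := by rw [h0]; ring
    rwa [he] at h
  have hy₀ne : y₀ ≠ 0 := hcne y₀ hy₀a
  -- sum of elements of different degree is nonzero
  have hne : ∀ u v : K, u ≠ 0 → v ≠ 0 → deg u ≠ deg v → u + v ≠ 0 := by
    intro u v hu hv hd h0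
    have hv' : v = -u := by linear_combination h0
    rw [hv', hneg u hu] at hd
    exact hd rfl
  -- degree of a sum where one term strictly dominates
  have hmax : ∀ u v : K, u ≠ 0 → v ≠ 0 → deg u < deg v → deg (u + v) = deg v := by
    intro u v hu hv hlt
    have hs : u + v ≠ 0 := hne u v hu hv hlt.ne
    have h1 : deg (u + v) ≤ deg v := (hna u v hu hv hs).trans_eq (max_eq_right hlt.le)
    have h2 : deg v ≤ max (deg (u + v)) (deg u) := by
      have he : (u + v) + (-u) = v := by ring
      have := hna (u + v) (-u) hs (neg_ne_zero.mpr hu) (by rw [he]; exact hv)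
      rwa [he, hneg u hu] at this
    rcases le_max_iff.mp h2 with h | h
    · omega
    · omega
  -- Part 1: bijection in degrees n > r
  have part1 : ∀ n : ℤ, r < n →
      Nat.card {y : K | y - x ∈ 𝔞 ∧ y ≠ 0 ∧ deg y = n} =
        Nat.card {a : K | a ∈ 𝔞 ∧ a ≠ 0 ∧ deg a = n} := by
    intro n hn
    refine Nat.card_congr ⟨fun y => ⟨y.1 - y₀, ?_⟩, fun a => ⟨a.1 + y₀, ?_⟩, ?_, ?_⟩
    · obtain ⟨h1, h2, h3⟩ := y.2
      have hm : y.1 - y₀ ∈ 𝔞 := by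
        have := 𝔞.sub_mem h1 hy₀a
        rwa [sub_sub_sub_cancel_right] at this
      have hne0 : y.1 - y₀ ≠ 0 := by
        intro h0
        have : y.1 = y₀ := by linear_combination h0
        rw [this, hy₀deg] at h3; omega
      refine ⟨hm, hne0, ?_⟩
      have he : -y₀ + y.1 = y.1 - y₀ := by ring
      have := hmax (-y₀) y.1 (neg_ne_zero.mpr hy₀ne) h2
        (by rw [hneg y₀ hy₀ne, hy₀deg, h3]; exact hn)
      rwa [he, h3] at this
    · obtain ⟨h1, h2, h3⟩ := a.2
      have hm : a.1 + y₀ - x ∈ 𝔞 := by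
        have := 𝔞.add_mem h1 hy₀a
        rwa [show a.1 + (y₀ - x) = a.1 + y₀ - x by ring] at this
      have hd : deg (y₀ + a.1) = deg a.1 :=
        hmax y₀ a.1 hy₀ne h2 (by rw [hy₀deg, h3]; exact hn)
      refine ⟨hm, hcne _ hm, ?_⟩
      rw [show a.1 + y₀ = y₀ + a.1 by ring, hd, h3]
    · intro y; apply Subtype.ext; simp
    · intro a; apply Subtype.ext; simp
  -- Part 2: degree r elements of the coset ↔ 𝔞_r
  have part2 : Nat.card {y : K | y - x ∈ 𝔞 ∧ y ≠ 0 ∧ deg y = r} =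
      Nat.card {a : K | a ∈ 𝔞 ∧ (a = 0 ∨ deg a ≤ r)} := by
    refine Nat.card_congr ⟨fun y => ⟨y.1 - y₀, ?_⟩, fun a => ⟨a.1 + y₀, ?_⟩, ?_, ?_⟩
    · obtain ⟨h1, h2, h3⟩ := y.2
      have hm : y.1 - y₀ ∈ 𝔞 := by
        have := 𝔞.sub_mem h1 hy₀a
        rwa [sub_sub_sub_cancel_right] at this
      refine ⟨hm, ?_⟩
      by_cases h0 : y.1 - y₀ = 0
      · exact Or.inl h0
      · right
        have he : y.1 + (-y₀) = y.1 - y₀ := by ring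
        have := hna y.1 (-y₀) h2 (neg_ne_zero.mpr hy₀ne) (by rw [he]; exact h0)
        rw [he, hneg y₀ hy₀ne, h3, hy₀deg, max_self] at this
        exact this
    · obtain ⟨h1, h2⟩ := a.2
      have hm : a.1 + y₀ - x ∈ 𝔞 := by
        have := 𝔞.add_mem h1 hy₀a
        rwa [show a.1 + (y₀ - x) = a.1 + y₀ - x by ring] at this
      have hne0 : a.1 + y₀ ≠ 0 := hcne _ hm
      refine ⟨hm, hne0, ?_⟩
      rcases h2 with h0 | hle
      · rw [h0, zero_add, hy₀deg]
      · have hg : r ≤ deg (a.1 + y₀) := hr_min _ hne0 hm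
        rcases eq_or_ne a.1 0 with h0 | h0
        · rw [h0, zero_add, hy₀deg]
        · have := hna a.1 y₀ h0 hy₀ne hne0
          rw [hy₀deg] at this
          have : deg (a.1 + y₀) ≤ r := this.trans (max_le hle le_rfl)
          omega
    · intro y; apply Subtype.ext; simp
    · intro a; apply Subtype.ext; simp
  -- Part 3: no coset elements of degree < r
  have part3 : ∀ n : ℤ, n < r →
      Nat.card {y : K | y - x ∈ 𝔞 ∧ y ≠ 0 ∧ deg y = n} = 0 := by
    intro n hn
    have he : {y : K | y - x ∈ 𝔞 ∧ y ≠ 0 ∧ deg y = n} = ∅ := by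
      ext y
      simp only [Set.mem_setOf_eq, Set.mem_empty_iff_false, iff_false, not_and]
      intro h1 h2 h3
      have := hr_min y h2 h1
      omega
    rw [he]
    simp
  refine ⟨part1, part2, part3, ?_⟩
  -- finiteness
  have finA : ∀ n : ℤ, {a : K | a ∈ 𝔞 ∧ a ≠ 0 ∧ deg a = n}.Finite := by
    intro n
    exact (hfin n).subset (fun a ⟨h1, h2, h3⟩ => ⟨Or.inl h1, h2, h3⟩)
  have hn₀r : n₀ ≤ r := by
    have := hlb y₀ hy₀ne (Or.inr hy₀a)
    omega
  -- the key count: #𝔞_r = 1 + ∑_{n₀ ≤ n ≤ r} #A_n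
  have hcount : Nat.card {a : K | a ∈ 𝔞 ∧ (a = 0 ∨ deg a ≤ r)} =
      1 + ∑ n ∈ Finset.Icc n₀ r, Nat.card {a : K | a ∈ 𝔞 ∧ a ≠ 0 ∧ deg a = n} := by
    classical
    set T : Finset K :=
      insert 0 ((Finset.Icc n₀ r).biUnion fun n => (finA n).toFinset) with hT
    have hBT : {a : K | a ∈ 𝔞 ∧ (a = 0 ∨ deg a ≤ r)} = ↑T := by
      ext a
      simp only [hT, Set.mem_setOf_eq, Finset.coe_insert, Set.mem_insert_iff,
        Finset.coe_biUnion, Set.mem_iUnion, Finset.mem_coe, Finset.mem_Icc,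
        Set.Finite.mem_toFinset]
      constructor
      · rintro ⟨h1, h0 | hle⟩
        · exact Or.inl h0
        · rcases eq_or_ne a 0 with h0 | h0
          · exact Or.inl h0
          · exact Or.inr ⟨deg a, ⟨hlb a h0 (Or.inl h1), hle⟩, h1, h0, rfl⟩
      · rintro (h0 | ⟨n, ⟨_, hnr⟩, h1, h2, h3⟩)
        · exact ⟨by rw [h0]; exact 𝔞.zero_mem, Or.inl h0⟩
        · exact ⟨h1, Or.inr (by omega)⟩
    have h0T : (0 : K) ∉ (Finset.Icc n₀ r).biUnion fun n => (finA n).toFinset := by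
      intro h
      simp only [Finset.mem_biUnion, Set.Finite.mem_toFinset, Set.mem_setOf_eq] at h
      obtain ⟨n, -, -, h0, -⟩ := h
      exact h0 rfl
    have hd : ∀ m ∈ Finset.Icc n₀ r, ∀ n ∈ Finset.Icc n₀ r, m ≠ n →
        Disjoint ((finA m).toFinset) ((finA n).toFinset) := by
      intro m hm n hn hmn
      simp only [Finset.disjoint_left, Set.Finite.mem_toFinset, Set.mem_setOf_eq]
      rintro a ⟨-, -, ha⟩ ⟨-, -, hb⟩
      omega
    rw [hBT, Nat.card_coe_set_eq, Set.ncard_coe_finset, hT,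
      Finset.card_insert_of_notMem h0T, Finset.card_biUnion hd]
    have hsum : ∑ n ∈ Finset.Icc n₀ r, ((finA n).toFinset).card
        = ∑ n ∈ Finset.Icc n₀ r, Nat.card {a : K | a ∈ 𝔞 ∧ a ≠ 0 ∧ deg a = n} :=
      Finset.sum_congr rfl fun n _ => by
        rw [Nat.card_coe_set_eq, Set.ncard_eq_toFinset_card _ (finA n)]
    rw [hsum]
    omega
  -- the inequality
  intro S hS N hN
  have hS0 : (0 : ℝ) < S := lt_of_lt_of_le one_pos hS
  have hsplit : Finset.Icc n₀ N = Finset.Icc n₀ r ∪ Finset.Ioc r N := by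
    ext n
    simp only [Finset.mem_Icc, Finset.mem_union, Finset.mem_Ioc]
    omega
  have hdisj : Disjoint (Finset.Icc n₀ r) (Finset.Ioc r N) := by
    simp only [Finset.disjoint_left, Finset.mem_Icc, Finset.mem_Ioc]
    intro n hn
    omega
  rw [hsplit, Finset.sum_union hdisj, Finset.sum_union hdisj]
  have heq : ∑ n ∈ Finset.Ioc r N,
        (Nat.card {a : K | a ∈ 𝔞 ∧ a ≠ 0 ∧ deg a = n} : ℝ) * S ^ n =
      ∑ n ∈ Finset.Ioc r N,
        (Nat.card {y : K | y - x ∈ 𝔞 ∧ y ≠ 0 ∧ deg y = n} : ℝ) * S ^ n := by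
    refine Finset.sum_congr rfl fun n hn => ?_
    rw [part1 n (Finset.mem_Ioc.mp hn).1]
  rw [heq]
  have hxr : ∑ n ∈ Finset.Icc n₀ r,
        (Nat.card {y : K | y - x ∈ 𝔞 ∧ y ≠ 0 ∧ deg y = n} : ℝ) * S ^ n =
      (Nat.card {y : K | y - x ∈ 𝔞 ∧ y ≠ 0 ∧ deg y = r} : ℝ) * S ^ r := by
    refine Finset.sum_eq_single_of_mem r (Finset.mem_Icc.mpr ⟨hn₀r, le_rfl⟩) fun n hn hnr => ?_
    have hlt : n < r := by
      have := Finset.mem_Icc.mp hn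
      omega
    rw [part3 n hlt]
    simp
  rw [hxr, part2, hcount]
  push_cast
  have hzle : ∀ n ∈ Finset.Icc n₀ r, (Nat.card {a : K | a ∈ 𝔞 ∧ a ≠ 0 ∧ deg a = n} : ℝ) * S ^ n ≤
      (Nat.card {a : K | a ∈ 𝔞 ∧ a ≠ 0 ∧ deg a = n} : ℝ) * S ^ r := by
    intro n hn
    have hnr : n ≤ r := (Finset.mem_Icc.mp hn).2
    have : S ^ n ≤ S ^ r := zpow_le_zpow_right₀ hS hnr
    exact mul_le_mul_of_nonneg_left this (Nat.cast_nonneg _)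
  have h1 : ∑ n ∈ Finset.Icc n₀ r,
        (Nat.card {a : K | a ∈ 𝔞 ∧ a ≠ 0 ∧ deg a = n} : ℝ) * S ^ n ≤
      (∑ n ∈ Finset.Icc n₀ r,
        (Nat.card {a : K | a ∈ 𝔞 ∧ a ≠ 0 ∧ deg a = n} : ℝ)) * S ^ r := by
    rw [Finset.sum_mul]
    exact Finset.sum_le_sum hzle
  have hSr : (0 : ℝ) < S ^ r := zpow_pos hS0 r
  nlinarith [hSr, h1]
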